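/- Let M be a complete finitely injective metric space and let {B(z_i, R_i) : i ∈ I} be a family of pairwise intersecting closed balls in M whose set of centers {z_i : i ∈ I} is compact. Then X := ⋂_{i∈I} B(z_i, R_i) is nonempty, complete, and geodesic (every two points of X have a midpoint in X). -/

import Mathlib

open Metric Set

/-- A metric space is geodesic if any two distinct points are joined by an isometric curve. -/
def IsGeodesicSpace (M : Type*) [MetricSpace M] : Prop :=
  ∀ x y : M, x ≠ y → ∃ α : ℝ → M, α 0 = x ∧ α (dist x y) = y ∧
    ∀ s ∈ Set.Icc (0 : ℝ) (dist x y), ∀ t ∈ Set.Icc (0 : ℝ) (dist x y),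
      dist (α s) (α t) = |s - t|

/-- Finite intersection property of balls. -/
def FiniteBallIP (M : Type*) [MetricSpace M] : Prop :=
  ∀ (n : ℕ) (c : Fin n → M) (r : Fin n → ℝ),
    (∀ i j, (closedBall (c i) (r i) ∩ closedBall (c j) (r j)).Nonempty) →
    (⋂ i, closedBall (c i) (r i)).Nonempty

lemma pairmeet {M : Type*} [MetricSpace M] (hgeo : IsGeodesicSpace M)
    (x y : M) (r s : ℝ) (hr : 0 ≤ r) (hs : 0 ≤ s) (h : dist x y ≤ r + s) :
    (closedBall x r ∩ closedBall y s).Nonempty := by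
  rcases eq_or_ne x y with rfl | hne
  · exact ⟨x, by simp [hr], by simp [hs]⟩
  · obtain ⟨α, h0, hde, hiso⟩ := hgeo x y hne
    set d := dist x y with hdd
    have hd0 : 0 ≤ d := dist_nonneg
    set t := min r d with ht
    have ht0 : 0 ≤ t := le_min hr hd0
    have htd : t ≤ d := min_le_right _ _
    have e1 : dist x (α t) = t := by
      have := hiso 0 ⟨le_refl 0, hd0⟩ t ⟨ht0, htd⟩
      rw [h0] at this
      rw [this, abs_of_nonpos (by linarith)]
      ring
    have e2 : dist (α t) y = d - t := by
      have := hiso t ⟨ht0, htd⟩ d ⟨hd0, le_refl d⟩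
      rw [hde] at this
      rw [this, abs_of_nonpos (by linarith)]
      ring
    refine ⟨α t, mem_closedBall.2 ?_, mem_closedBall.2 ?_⟩
    · rw [dist_comm, e1]; exact min_le_left _ _
    · rw [e2]
      rcases le_total r d with hrd | hrd
      · rw [ht, min_eq_left hrd]; linarith
      · rw [ht, min_eq_right hrd]; linarith

lemma fip_fintype {M : Type*} [MetricSpace M] (hfip : FiniteBallIP M) {κ : Type*} [Fintype κ]
    (c : κ → M) (r : κ → ℝ)
    (h : ∀ i j, (closedBall (c i) (r i) ∩ closedBall (c j) (r j)).Nonempty) :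
    (⋂ i, closedBall (c i) (r i)).Nonempty := by
  obtain ⟨x, hx⟩ := hfip (Fintype.card κ) (c ∘ (Fintype.equivFin κ).symm)
    (r ∘ (Fintype.equivFin κ).symm) (fun i j => h _ _)
  refine ⟨x, mem_iInter.2 fun i => ?_⟩
  simpa using mem_iInter.1 hx (Fintype.equivFin κ i)

lemma compactIP {M : Type*} [MetricSpace M] [Nonempty M] [CompleteSpace M]
    (hgeo : IsGeodesicSpace M) (hfip : FiniteBallIP M)
    {ι : Type*} (z : ι → M) (R : ι → ℝ)
    (hR : ∀ i, 0 ≤ R i)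
    (hd : ∀ i j, dist (z i) (z j) ≤ R i + R j)
    (hcomp : IsCompact (Set.range z)) :
    (⋂ i, closedBall (z i) (R i)).Nonempty := by
  rcases isEmpty_or_nonempty ι with hι | hι
  · simpa [iInter_of_empty] using (univ_nonempty : (Set.univ : Set M).Nonempty)
  obtain ⟨i0⟩ := hι
  -- the key approximation step
  have hstep : ∀ (A : ℝ), 0 < A → ∀ p : M, (∀ i, dist p (z i) ≤ R i + A) →
      ∃ q, (∀ i, dist q (z i) ≤ R i + A / 2) ∧ dist p q ≤ A := by
    intro A hA p hp
    set ε := A / 4 with hεdef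
    have hε : 0 < ε := by positivity
    obtain ⟨t, ht⟩ := hcomp.elim_finite_subcover (fun i => ball (z i) ε)
      (fun i => isOpen_ball) (by rintro w ⟨i, rfl⟩; exact mem_iUnion.2 ⟨i, mem_ball_self hε⟩)
    set ρ : ι → ℝ := fun k => sInf (R '' {j | dist (z j) (z k) < ε}) with hρ
    have hne : ∀ k, (R '' {j | dist (z j) (z k) < ε}).Nonempty :=
      fun k => ⟨R k, k, by simpa using hε, rfl⟩
    have hbdd : ∀ k, BddBelow (R '' {j | dist (z j) (z k) < ε}) :=
      fun k => ⟨0, by rintro r ⟨j, _, rfl⟩; exact hR j⟩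
    have hρ0 : ∀ k, 0 ≤ ρ k := fun k => le_csInf (hne k) (by rintro r ⟨j, _, rfl⟩; exact hR j)
    have hρle : ∀ k j, dist (z j) (z k) < ε → ρ k ≤ R j :=
      fun k j h => csInf_le (hbdd k) ⟨j, h, rfl⟩
    have happrox : ∀ k, ∀ δ : ℝ, 0 < δ → ∃ j, dist (z j) (z k) < ε ∧ R j < ρ k + δ := by
      intro k δ hδ
      obtain ⟨r, ⟨j, hj, rfl⟩, hlt⟩ := Real.lt_sInf_add_pos (hne k) hδ
      exact ⟨j, hj, hlt⟩
    set c : Option {k // k ∈ t} → M := fun o => Option.elim o p (fun k => z k) with hc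
    set r : Option {k // k ∈ t} → ℝ := fun o => Option.elim o A (fun k => ρ k + ε) with hr'
    have hpk : ∀ k : ι, dist p (z k) ≤ A + (ρ k + ε) := by
      intro k
      refine le_of_forall_pos_le_add ?_
      intro δ hδ
      obtain ⟨j, hj, hjR⟩ := happrox k δ hδ
      calc dist p (z k) ≤ dist p (z j) + dist (z j) (z k) := dist_triangle _ _ _
        _ ≤ (R j + A) + ε := add_le_add (hp j) hj.le
        _ ≤ A + (ρ k + ε) + δ := by linarith
    have hkl : ∀ k l : ι, dist (z k) (z l) ≤ (ρ k + ε) + (ρ l + ε) := by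
      intro k l
      refine le_of_forall_pos_le_add ?_
      intro δ hδ
      obtain ⟨j1, hj1, hj1R⟩ := happrox k (δ/2) (by linarith)
      obtain ⟨j2, hj2, hj2R⟩ := happrox l (δ/2) (by linarith)
      have h1 : dist (z k) (z j1) ≤ ε := by rw [dist_comm]; exact hj1.le
      have h2 : dist (z j2) (z l) ≤ ε := hj2.le
      have h3 := hd j1 j2
      calc dist (z k) (z l) ≤ dist (z k) (z j1) + dist (z j1) (z j2) + dist (z j2) (z l) :=
            dist_triangle4 _ _ _ _
        _ ≤ ε + (R j1 + R j2) + ε := by linarith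
        _ ≤ (ρ k + ε) + (ρ l + ε) + δ := by linarith
    have hr0 : ∀ o, 0 ≤ r o := by rintro (_ | k); exacts [hA.le, add_nonneg (hρ0 k) hε.le]
    have key : ∀ o₁ o₂, dist (c o₁) (c o₂) ≤ r o₁ + r o₂ := by
      rintro (_ | k) (_ | l)
      · simp only [hc, hr', Option.elim, dist_self]; linarith
      · simpa [hc, hr'] using hpk l
      · calc dist (c (some k)) (c none) = dist p (z (k : ι)) := by simp [hc, dist_comm]
          _ ≤ A + (ρ (k : ι) + ε) := hpk k
          _ = r (some k) + r none := by simp only [hr', Option.elim]; ring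
      · simpa [hc, hr'] using hkl k l
    obtain ⟨q, hq⟩ := fip_fintype hfip c r
      (fun o₁ o₂ => pairmeet hgeo _ _ _ _ (hr0 o₁) (hr0 o₂) (key o₁ o₂))
    rw [mem_iInter] at hq
    refine ⟨q, ?_, ?_⟩
    · intro i
      obtain ⟨k, hk, hzk⟩ := mem_iUnion₂.1 (ht ⟨i, rfl⟩)
      have h1 : dist q (z k) ≤ ρ k + ε := by
        simpa [hc, hr', mem_closedBall] using hq (some ⟨k, hk⟩)
      have h2 : ρ k ≤ R i := hρle k i (mem_ball.1 hzk)
      have h3 : dist (z k) (z i) < ε := by rw [dist_comm]; exact mem_ball.1 hzk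
      have h4 : ε + ε ≤ A / 2 := by rw [hεdef]; linarith
      calc dist q (z i) ≤ dist q (z k) + dist (z k) (z i) := dist_triangle _ _ _
        _ ≤ R i + A / 2 := by linarith
    · have := hq none
      simpa [hc, hr', mem_closedBall, dist_comm] using this
  -- iterate to build a Cauchy sequence
  set A0 : ℝ := R i0 + 1 with hA0
  have hA0pos : 0 < A0 := by have := hR i0; rw [hA0]; linarith
  set P : ℕ → M → Prop := fun n p => ∀ i, dist p (z i) ≤ R i + A0 / 2 ^ n with hP
  have h0 : P 0 (z i0) := by
    intro i
    simp only [pow_zero, div_one]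
    have := hd i0 i
    have := hR i0
    rw [hA0]; linarith
  have hrec : ∀ n p, P n p → ∃ q, P (n+1) q ∧ dist p q ≤ A0 / 2 ^ n := by
    intro n p hpn
    obtain ⟨q, hq1, hq2⟩ := hstep (A0 / 2 ^ n) (by positivity) p hpn
    refine ⟨q, fun i => ?_, hq2⟩
    have he : A0 / 2 ^ n / 2 = A0 / 2 ^ (n+1) := by rw [pow_succ]; ring
    rw [← he]; exact hq1 i
  choose! F hF1 hF2 using hrec
  let x : ℕ → M := fun n => Nat.rec (z i0) (fun n q => F n q) n
  have hxP : ∀ n, P n (x n) := by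
    intro n
    induction n with
    | zero => exact h0
    | succ n ih => exact hF1 n (x n) ih
  have hxd : ∀ n, dist (x n) (x (n+1)) ≤ A0 * (1/2) ^ n := by
    intro n
    have h := hF2 n (x n) (hxP n)
    have : dist (x n) (x (n+1)) = dist (x n) (F n (x n)) := rfl
    rw [this]
    calc dist (x n) (F n (x n)) ≤ A0 / 2 ^ n := h
      _ = A0 * (1/2) ^ n := by rw [div_pow]; ring
  have hcauchy : CauchySeq x := cauchySeq_of_le_geometric (1/2) A0 (by norm_num) hxd
  obtain ⟨l, hl⟩ := cauchySeq_tendsto_of_complete hcauchy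
  refine ⟨l, mem_iInter.2 fun i => mem_closedBall.2 ?_⟩
  have h1 : Filter.Tendsto (fun n => dist (x n) (z i)) Filter.atTop (nhds (dist l (z i))) :=
    hl.dist tendsto_const_nhds
  have h2 : Filter.Tendsto (fun n : ℕ => R i + A0 / 2 ^ n) Filter.atTop (nhds (R i)) := by
    have hz2 : Filter.Tendsto (fun n : ℕ => A0 / 2 ^ n) Filter.atTop (nhds 0) := by
      have := tendsto_pow_atTop_nhds_zero_of_lt_one (le_of_lt one_half_pos)
        (by norm_num : (1:ℝ)/2 < 1)
      have h3 := this.const_mul A0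
      simpa [div_eq_mul_inv, inv_pow, mul_comm] using h3
    simpa using tendsto_const_nhds.add hz2
  exact le_of_tendsto_of_tendsto' h1 h2 (fun n => hxP n i)

theorem stmt15 {M : Type*} [MetricSpace M] [Nonempty M] [CompleteSpace M]
    (hgeo : IsGeodesicSpace M) (hfip : FiniteBallIP M)
    {ι : Type*} (z : ι → M) (R : ι → ℝ)
    (hpair : ∀ i j, (closedBall (z i) (R i) ∩ closedBall (z j) (R j)).Nonempty)
    (hcomp : IsCompact (Set.range z)) :
    (⋂ i, closedBall (z i) (R i)).Nonempty ∧
    IsComplete (⋂ i, closedBall (z i) (R i)) ∧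
    ∀ x ∈ ⋂ i, closedBall (z i) (R i), ∀ y ∈ ⋂ i, closedBall (z i) (R i),
      ∃ w ∈ ⋂ i, closedBall (z i) (R i),
        dist x w = dist x y / 2 ∧ dist y w = dist x y / 2 := by
  have hR : ∀ i, 0 ≤ R i := by
    intro i
    obtain ⟨w, hw, -⟩ := hpair i i
    exact le_trans dist_nonneg (mem_closedBall.1 hw)
  have hd : ∀ i j, dist (z i) (z j) ≤ R i + R j := by
    intro i j
    obtain ⟨w, hwi, hwj⟩ := hpair i j
    calc dist (z i) (z j) ≤ dist (z i) w + dist w (z j) := dist_triangle _ _ _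
      _ ≤ R i + R j := add_le_add (by rw [dist_comm]; exact mem_closedBall.1 hwi)
          (mem_closedBall.1 hwj)
  refine ⟨compactIP hgeo hfip z R hR hd hcomp, ?_, ?_⟩
  · exact (isClosed_iInter fun i => isClosed_closedBall).isComplete
  · intro x hx y hy
    set d := dist x y with hdxy
    have hd2 : 0 ≤ d / 2 := by positivity
    set z' : ι ⊕ Bool → M := Sum.elim z (fun b => if b then x else y) with hz'
    set R' : ι ⊕ Bool → ℝ := Sum.elim R (fun _ => d / 2) with hR'
    have hR'0 : ∀ a, 0 ≤ R' a := by rintro (i | b); exacts [hR i, hd2]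
    have hxz : ∀ i, dist x (z i) ≤ R i := fun i => mem_closedBall.1 (mem_iInter.1 hx i)
    have hyz : ∀ i, dist y (z i) ≤ R i := fun i => mem_closedBall.1 (mem_iInter.1 hy i)
    have hd' : ∀ a b, dist (z' a) (z' b) ≤ R' a + R' b := by
      have hb : ∀ b : Bool, dist (if b then x else y) y ≤ d / 2 + d / 2 := by
        intro b
        cases b <;> simp [hdxy] <;> positivity
      have hzb : ∀ i (b : Bool), dist (z i) (if b then x else y) ≤ R i + d / 2 := by
        intro i b
        cases b
        · simpa [dist_comm] using le_trans (hyz i) (by linarith)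
        · simpa [dist_comm] using le_trans (hxz i) (by linarith)
      rintro (i | b) (j | b')
      · exact hd i j
      · simpa [hz', hR'] using hzb i b'
      · calc dist (z' (Sum.inr b)) (z' (Sum.inl j)) = dist (z j) (if b then x else y) := by
              simp [hz', dist_comm]
          _ ≤ R j + d / 2 := hzb j b
          _ = R' (Sum.inr b) + R' (Sum.inl j) := by simp [hR']; ring
      · simp only [hz', hR', Sum.elim_inr]
        cases b <;> cases b' <;> simp [dist_comm, hdxy] <;> linarith [dist_nonneg (x := x) (y := y)]
    have hcomp' : IsCompact (Set.range z') := by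
      rw [hz', Sum.elim_range]
      exact hcomp.union (Set.finite_range _).isCompact
    obtain ⟨w, hw⟩ := compactIP hgeo hfip z' R' hR'0 hd' hcomp'
    rw [mem_iInter] at hw
    have hwx : dist x w ≤ d / 2 := by
      have := hw (Sum.inr true)
      rw [dist_comm]
      simpa [hz', hR'] using this
    have hwy : dist y w ≤ d / 2 := by
      have := hw (Sum.inr false)
      rw [dist_comm]
      simpa [hz', hR'] using this
    have tri : d ≤ dist x w + dist y w := by
      calc d = dist x y := hdxy
        _ ≤ dist x w + dist w y := dist_triangle _ _ _
        _ = dist x w + dist y w := by rw [dist_comm w y]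
    exact ⟨w, mem_iInter.2 fun i => hw (Sum.inl i), by linarith, by linarith⟩
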